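/- For a (d_v, d_c)-regular bipartite graph G with vertex set V, the number of i-cycles satisfies N_i = (Σ_j λ_j^i − Ω_i − Ψ_i)/(2i), where λ_1,…,λ_{|V|} are the eigenvalues of the adjacency matrix of G, Ω_i is the number of closed cycle-free walks of length i, and Ψ_i is the number of closed walks with cycle of length i. -/

import Mathlib

open SimpleGraph

def cycleFree {V : Type*} {G : SimpleGraph V} {u v : V} (w : G.Walk u v) : Prop :=
  (SimpleGraph.fromEdgeSet {e | e ∈ w.edges}).IsAcyclic

def isCWWC {V : Type*} {G : SimpleGraph V} {u : V} (w : G.Walk u u) : Prop :=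
  ¬ w.IsCycle ∧ ¬ cycleFree w

/-- Number of closed cycle-free walks of length `k` (starting vertex and direction
distinguished). -/
noncomputable def cycleFreeWalkCount {V : Type*} (G : SimpleGraph V) (k : ℕ) : ℕ :=
  Nat.card (Σ v : V, {w : G.Walk v v // w.length = k ∧ cycleFree w})

/-- Number of closed walks with cycle of length `k`. -/
noncomputable def cwwcCount {V : Type*} (G : SimpleGraph V) (k : ℕ) : ℕ :=
  Nat.card (Σ v : V, {w : G.Walk v v // w.length = k ∧ isCWWC w})

/-- Number of cycles of length `i` counted as subgraphs. -/
noncomputable def cycleCount {V : Type*} (G : SimpleGraph V) (i : ℕ) : ℕ :=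
  Nat.card {s : Set (Sym2 V) //
    ∃ (u : V) (c : G.Walk u u), c.IsCycle ∧ c.length = i ∧ {e | e ∈ c.edges} = s}

/- ### Auxiliary lemmas -/

section Aux

variable {V : Type*} {G : SimpleGraph V}

namespace SimpleGraph.Walk

lemma first_edge_mem' {u v : V} (w : G.Walk u v) (hw : ¬ w.Nil) :
    s(u, w.getVert 1) ∈ w.edges := by
  cases w with
  | nil => simp at hw
  | cons h q => rw [getVert_cons_succ, getVert_zero]; simp

lemma path_first_edge' {a b x : V} (p : G.Walk a b) (hp : p.IsPath) (hx : s(a, x) ∈ p.edges) :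
    p.getVert 1 = x := by
  cases p with
  | nil => simp at hx
  | cons h r =>
    rename_i c
    rw [cons_isPath_iff] at hp
    rw [edges_cons, List.mem_cons] at hx
    rcases hx with hx | hx
    · rw [Sym2.eq_iff] at hx
      rcases hx with ⟨-, hcx⟩ | ⟨hac, -⟩
      · rw [getVert_cons_succ, getVert_zero, hcx]
      · exact absurd hac.symm h.ne'
    · exact absurd (fst_mem_support_of_mem_edges r hx) hp.2

protected lemma IsCycle.reverse' {v : V} {w : G.Walk v v} (hw : w.IsCycle) :
    w.reverse.IsCycle := by
  rw [isCycle_def] at hw ⊢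
  obtain ⟨ht, hne, hnd⟩ := hw
  refine ⟨(reverse_isTrail_iff w).2 ht, fun h => hne (by simpa using congrArg Walk.reverse h), ?_⟩
  have htne : w.support.tail ≠ [] := by
    intro h
    apply hne
    have := w.length_support
    rw [support_eq_cons, h] at this
    simp only [List.length_cons, List.length_nil] at this
    exact nil_iff_eq_nil.mp (length_eq_zero_iff.mp (by omega))
  have hv : w.support.getLast (by simp) = v := w.getLast_support
  have hs0 : w.support = w.support.dropLast ++ [v] := by
    conv_lhs => rw [← List.dropLast_append_getLast (l := w.support) (by simp)]
    rw [hv]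
  have hs1 : w.support.dropLast = v :: w.support.tail.dropLast := by
    conv_lhs => rw [support_eq_cons]
    rw [List.dropLast_cons_of_ne_nil htne]
  have hs2 : w.support.tail = w.support.tail.dropLast ++ [v] := by
    have := hs0
    rw [hs1] at this
    conv_lhs at this => rw [support_eq_cons]
    exact congrArg List.tail this
  rw [support_reverse, hs0, hs1]
  rw [hs2] at hnd
  simp only [List.nodup_append, List.nodup_cons, List.reverse_append, List.reverse_singleton,
    List.singleton_append, List.nodup_reverse, List.tail_cons, List.mem_reverse,
    List.disjoint_singleton, List.not_mem_nil, not_false_eq_true, List.nodup_nil,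
    and_true, List.mem_singleton] at hnd ⊢
  tauto

/-- A path is determined by its endpoints and its edge set. -/
lemma path_eq_of_edges {a b : V} (p₁ p₂ : G.Walk a b) (h₁ : p₁.IsPath) (h₂ : p₂.IsPath)
    (hs : ∀ e, e ∈ p₁.edges ↔ e ∈ p₂.edges) : p₁ = p₂ := by
  induction p₁ with
  | nil => exact isPath_iff_eq_nil.1 h₂ |>.symm
  | cons h q ih =>
    rename_i u c w
    cases p₂ with
    | nil => simpa using (hs s(u, c)).1 (by simp)
    | cons h2 q2 =>
      rename_i c2
      rw [cons_isPath_iff] at h₁ h₂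
      have hc : c = c2 := by
        have hm := (hs s(u, c)).1 (by simp)
        rw [edges_cons, List.mem_cons] at hm
        rcases hm with hm | hm
        · rw [Sym2.eq_iff] at hm
          rcases hm with ⟨-, h'⟩ | ⟨h', -⟩
          · exact h'
          · exact absurd h'.symm h2.ne'
        · exact absurd (fst_mem_support_of_mem_edges q2 hm) h₂.2
      subst hc
      have hq : q = q2 := by
        refine ih _ h₁.1 h₂.1 (fun e => ⟨fun he => ?_, fun he => ?_⟩)
        · have := (hs e).1 (by simp [he])
          rw [edges_cons, List.mem_cons] at this
          rcases this with rfl | h'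
          · exact absurd (fst_mem_support_of_mem_edges q he) h₁.2
          · exact h'
        · have := (hs e).2 (by simp [he])
          rw [edges_cons, List.mem_cons] at this
          rcases this with rfl | h'
          · exact absurd (fst_mem_support_of_mem_edges q2 he) h₂.2
          · exact h'
      subst hq
      rfl

/-- A cycle is determined by its edge set and its second vertex. -/
lemma cycle_eq_of_edges {v : V} (w₁ w₂ : G.Walk v v) (h₁ : w₁.IsCycle) (h₂ : w₂.IsCycle)
    (hs : ∀ e, e ∈ w₁.edges ↔ e ∈ w₂.edges) (hv : w₁.getVert 1 = w₂.getVert 1) : w₁ = w₂ := by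
  cases w₁ with
  | nil => exact absurd h₁ IsCycle.not_of_nil
  | cons a₁ q₁ =>
    cases w₂ with
    | nil => exact absurd h₂ IsCycle.not_of_nil
    | cons a₂ q₂ =>
      rename_i b₁ b₂
      rw [getVert_cons_succ, getVert_zero, getVert_cons_succ, getVert_zero] at hv
      subst hv
      rw [cons_isCycle_iff] at h₁ h₂
      have hq : q₁ = q₂ := by
        refine path_eq_of_edges q₁ q₂ h₁.1 h₂.1 (fun e => ⟨fun he => ?_, fun he => ?_⟩)
        · have := (hs e).1 (by simp [he])
          rw [edges_cons, List.mem_cons] at this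
          rcases this with rfl | h'
          · exact absurd he h₁.2
          · exact h'
        · have := (hs e).2 (by simp [he])
          rw [edges_cons, List.mem_cons] at this
          rcases this with rfl | h'
          · exact absurd he h₂.2
          · exact h'
      subst hq
      rfl

lemma cycle_dart_head {v x : V} (w : G.Walk v v) (hw : w.IsCycle) (hx : s(v, x) ∈ w.edges) :
    w.getVert 1 = x ∨ w.reverse.getVert 1 = x := by
  have h3 := hw.three_le_length
  cases w with
  | nil => exact absurd hw IsCycle.not_of_nil
  | cons h q =>
    rename_i b
    rw [cons_isCycle_iff] at hw
    rw [edges_cons, List.mem_cons] at hx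
    rcases hx with hx | hx
    · left
      rw [Sym2.eq_iff] at hx
      rcases hx with ⟨-, h'⟩ | ⟨h', -⟩
      · rw [getVert_cons_succ, getVert_zero, h'.symm]
      · exact absurd h'.symm h.ne'
    · right
      have hq : q.reverse.getVert 1 = x :=
        path_first_edge' q.reverse hw.1.reverse (by rw [edges_reverse, List.mem_reverse]; exact hx)
      rw [length_cons] at h3
      rw [reverse_cons, getVert_append, if_pos (by rw [length_reverse]; omega)]
      exact hq

end SimpleGraph.Walk

open SimpleGraph.Walk

lemma exists_cycle_dart [DecidableEq V] {u : V} (c : G.Walk u u) (hc : c.IsCycle) (d : G.Dart)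
    (hd : d.edge ∈ c.edges) :
    ∃ w : G.Walk d.fst d.fst, w.IsCycle ∧ w.getVert 1 = d.snd ∧
      (∀ e, e ∈ w.edges ↔ e ∈ c.edges) ∧ w.length = c.length := by
  have hd' : s(d.fst, d.snd) ∈ c.edges := by
    have : d.edge = s(d.fst, d.snd) := rfl
    rwa [this] at hd
  have hmem : d.fst ∈ c.support := c.fst_mem_support_of_mem_edges hd'
  set c' := c.rotate _ hmem with hc'def
  have hc' : c'.IsCycle := hc.rotate hmem
  have hrot := c.rotate_edges _ hmem
  have hedges : ∀ e, e ∈ c'.edges ↔ e ∈ c.edges := fun e => hrot.mem_iff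
  have hlen : c'.length = c.length := by
    rw [← length_edges, ← length_edges, hrot.perm.length_eq]
  rcases cycle_dart_head c' hc' ((hedges _).2 hd') with h | h
  · exact ⟨c', hc', h, hedges, hlen⟩
  · refine ⟨c'.reverse, hc'.reverse', h, fun e => ?_, by rw [length_reverse]; exact hlen⟩
    rw [edges_reverse, List.mem_reverse]
    exact hedges e

/-- A cycle is not cycle-free. -/
lemma IsCycle.not_cycleFree {v : V} {w : G.Walk v v} (hc : w.IsCycle) : ¬ cycleFree w := by
  intro hcf
  have hsub : ∀ e ∈ w.edges, e ∈ (SimpleGraph.fromEdgeSet {e | e ∈ w.edges}).edgeSet := by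
    intro e he
    rw [edgeSet_fromEdgeSet]
    exact ⟨he, (G.not_isDiag_of_mem_edgeSet (w.edges_subset_edgeSet he))⟩
  exact hcf _ (hc.transfer hsub)

lemma finite_and {α : Type*} (P Q : α → Prop) [Finite {x // P x}] : Finite {x // P x ∧ Q x} :=
  Finite.of_equiv _ (Equiv.subtypeSubtypeEquivSubtypeInter P Q)

lemma nat_card_split {α : Type*} (P Q : α → Prop) [Finite {x // P x}] :
    Nat.card {x // P x} = Nat.card {x // P x ∧ Q x} + Nat.card {x // P x ∧ ¬ Q x} := by
  classical
  haveI := finite_and P Q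
  haveI := finite_and P (¬ Q ·)
  rw [← Nat.card_sum]
  apply Nat.card_congr
  exact ((Equiv.sumCompl fun x : {x // P x} => Q x.1).symm.trans
    (Equiv.sumCongr (Equiv.subtypeSubtypeEquivSubtypeInter P Q)
      (Equiv.subtypeSubtypeEquivSubtypeInter P (¬ Q ·))))

lemma nat_card_split3 {α : Type*} (L Q C : α → Prop) [Finite {x // L x}]
    (hQC : ∀ x, C x → ¬ Q x) :
    Nat.card {x // L x} = Nat.card {x // L x ∧ Q x} + Nat.card {x // L x ∧ (¬ C x ∧ ¬ Q x)}
      + Nat.card {x // L x ∧ C x} := by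
  classical
  rw [nat_card_split L Q]
  haveI := finite_and L (¬ Q ·)
  rw [nat_card_split (fun x => L x ∧ ¬ Q x) C]
  have e1 : Nat.card {x // (L x ∧ ¬ Q x) ∧ C x} = Nat.card {x // L x ∧ C x} :=
    Nat.card_congr (Equiv.subtypeEquivRight fun x => by
      constructor
      · rintro ⟨⟨h1, -⟩, h2⟩; exact ⟨h1, h2⟩
      · rintro ⟨h1, h2⟩; exact ⟨⟨h1, hQC x h2⟩, h2⟩)
  have e2 : Nat.card {x // (L x ∧ ¬ Q x) ∧ ¬ C x} = Nat.card {x // L x ∧ (¬ C x ∧ ¬ Q x)} :=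
    Nat.card_congr (Equiv.subtypeEquivRight fun x => by tauto)
  omega

lemma nat_card_sigma' {ι : Type*} [Fintype ι] (β : ι → Type*) [∀ i, Finite (β i)] :
    Nat.card (Σ i, β i) = ∑ i, Nat.card (β i) := by
  letI : ∀ i, Fintype (β i) := fun i => Fintype.ofFinite _
  simp [Nat.card_eq_fintype_card]

open Matrix in
lemma conj_pow_mat {n : Type*} [Fintype n] [DecidableEq n] (U D : Matrix n n ℝ)
    (h1 : U * star U = 1) (h2 : star U * U = 1) (k : ℕ) :
    (U * D * star U) ^ k = U * D ^ k * star U := by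
  induction k with
  | zero => simpa using h1.symm
  | succ k ih =>
    rw [pow_succ, ih, pow_succ]
    rw [show U * D ^ k * star U * (U * D * star U)
        = U * D ^ k * ((star U * U) * (D * star U)) by simp only [Matrix.mul_assoc], h2]
    simp only [Matrix.one_mul, Matrix.mul_assoc]

open Matrix in
lemma sum_pow_eigenvalues {n : Type*} [Fintype n] [DecidableEq n] (A : Matrix n n ℝ)
    (hA : A.IsHermitian) (i : ℕ) :
    ∑ j, hA.eigenvalues j ^ i = (A ^ i).trace := by
  have h1 : (hA.eigenvectorUnitary : Matrix n n ℝ) *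
      star (hA.eigenvectorUnitary : Matrix n n ℝ) = 1 :=
    Matrix.mem_unitaryGroup_iff.mp hA.eigenvectorUnitary.2
  have h2 : star (hA.eigenvectorUnitary : Matrix n n ℝ) *
      (hA.eigenvectorUnitary : Matrix n n ℝ) = 1 :=
    Matrix.mem_unitaryGroup_iff'.mp hA.eigenvectorUnitary.2
  conv_rhs => rw [hA.spectral_theorem, Unitary.conjStarAlgAut_apply]
  rw [conj_pow_mat _ _ h1 h2, Matrix.trace_mul_cycle, h2, Matrix.one_mul,
    Matrix.diagonal_pow, Matrix.trace_diagonal]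
  simp

end Aux

section Counting

variable {V : Type*} [Fintype V] [DecidableEq V] (G : SimpleGraph V) [DecidableRel G.Adj]

open SimpleGraph.Walk

lemma dart_count {u : V} (c : G.Walk u u) (hc : c.IsCycle) :
    Nat.card {d : G.Dart // d.edge ∈ c.edges} = 2 * c.length := by
  rw [Nat.card_eq_fintype_card, Fintype.card_subtype]
  rw [Finset.card_eq_sum_card_fiberwise
    (f := fun d : G.Dart => d.edge) (t := c.edges.toFinset)
    (fun d hd => by simpa using (Finset.mem_filter.mp hd).2)]
  have : ∀ e ∈ c.edges.toFinset,
      ((Finset.univ.filter fun d : G.Dart => d.edge ∈ c.edges).filter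
        fun d => d.edge = e).card = 2 := by
    intro e he
    rw [List.mem_toFinset] at he
    rw [Finset.filter_filter]
    have : ∀ d : G.Dart, (d.edge ∈ c.edges ∧ d.edge = e) ↔ d.edge = e := by
      intro d
      constructor
      · exact fun h => h.2
      · rintro rfl; exact ⟨he, rfl⟩
    rw [Finset.filter_congr (fun d _ => this d)]
    exact G.dart_edge_fiber_card e (c.edges_subset_edgeSet he)
  rw [Finset.sum_congr rfl this, Finset.sum_const, smul_eq_mul, mul_comm,
    List.toFinset_card_of_nodup hc.edges_nodup, SimpleGraph.Walk.length_edges]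

/-- The number of closed walks of length `i` which are cycles is `2 i` times the number of
`i`-cycles. -/
lemma cycle_walk_count (i : ℕ) :
    Nat.card (Σ v : V, {w : G.Walk v v // w.length = i ∧ w.IsCycle})
      = 2 * i * cycleCount G i := by
  classical
  set S := {s : Set (Sym2 V) //
    ∃ (u : V) (c : G.Walk u u), c.IsCycle ∧ c.length = i ∧ {e | e ∈ c.edges} = s} with hS
  letI : Fintype S := Fintype.ofFinite _
  have hf : ∀ x : (Σ v : V, {w : G.Walk v v // w.length = i ∧ w.IsCycle}),
      (Dart.mk (x.1, x.2.1.getVert 1) (adj_snd x.2.2.2.not_nil)).edge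
        ∈ ({e | e ∈ x.2.1.edges} : Set (Sym2 V)) :=
    fun x => x.2.1.first_edge_mem' x.2.2.2.not_nil
  set f : (Σ v : V, {w : G.Walk v v // w.length = i ∧ w.IsCycle})
      → (Σ s : S, {d : G.Dart // d.edge ∈ (s : Set (Sym2 V))}) :=
    fun x => ⟨⟨{e | e ∈ x.2.1.edges}, ⟨x.1, x.2.1, x.2.2.2, x.2.2.1, rfl⟩⟩,
      ⟨Dart.mk (x.1, x.2.1.getVert 1) (adj_snd x.2.2.2.not_nil), hf x⟩⟩ with hfdef
  have hbij : Function.Bijective f := by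
    constructor
    · rintro ⟨v₁, w₁, hl₁, hc₁⟩ ⟨v₂, w₂, hl₂, hc₂⟩ h
      have hd := congrArg
        (fun y : (Σ s : S, {d : G.Dart // d.edge ∈ (s : Set (Sym2 V))}) => (y.2 : G.Dart).toProd) h
      have hs := congrArg
        (fun y : (Σ s : S, {d : G.Dart // d.edge ∈ (s : Set (Sym2 V))}) => (y.1 : Set (Sym2 V))) h
      simp only [hfdef] at hd hs
      have hv : v₁ = v₂ := congrArg Prod.fst hd
      subst hv
      have hgv : w₁.getVert 1 = w₂.getVert 1 := congrArg Prod.snd hd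
      have hsets : ∀ e, e ∈ w₁.edges ↔ e ∈ w₂.edges := fun e => Set.ext_iff.mp hs e
      have : w₁ = w₂ := cycle_eq_of_edges w₁ w₂ hc₁ hc₂ hsets hgv
      subst this
      rfl
    · rintro ⟨⟨s, u, c, hc, hlen, hset⟩, d, hd⟩
      subst hset
      obtain ⟨w, hw1, hw2, hw3, hw4⟩ := exists_cycle_dart c hc d hd
      refine ⟨⟨d.fst, w, by rw [hw4]; exact hlen, hw1⟩, ?_⟩
      refine Sigma.ext (Subtype.ext (Set.ext fun e => hw3 e)) ?_
      rw [Subtype.heq_iff_coe_eq (fun x => by simp only [Set.mem_setOf_eq]; exact hw3 x.edge)]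
      apply SimpleGraph.Dart.ext
      show (d.fst, w.getVert 1) = d.toProd
      rw [hw2]
  rw [Nat.card_congr (Equiv.ofBijective f hbij), nat_card_sigma']
  have hterm : ∀ s : S, Nat.card {d : G.Dart // d.edge ∈ (s : Set (Sym2 V))} = 2 * i := by
    rintro ⟨s, u, c, hc, hlen, hset⟩
    subst hset
    have : Nat.card {d : G.Dart // d.edge ∈ ({e | e ∈ c.edges} : Set (Sym2 V))}
        = Nat.card {d : G.Dart // d.edge ∈ c.edges} :=
      Nat.card_congr (Equiv.subtypeEquivRight fun d => by simp)
    rw [this, dart_count G c hc, hlen]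
  rw [Finset.sum_congr rfl (fun s _ => hterm s), Finset.sum_const, smul_eq_mul]
  have hcc : cycleCount G i = Fintype.card S := by
    rw [cycleCount]
    exact Nat.card_eq_fintype_card
  rw [Finset.card_univ, hcc, mul_comm]

lemma walk_partition (i : ℕ) :
    Nat.card (Σ v : V, {w : G.Walk v v // w.length = i})
      = cycleFreeWalkCount G i + cwwcCount G i
        + Nat.card (Σ v : V, {w : G.Walk v v // w.length = i ∧ w.IsCycle}) := by
  classical
  haveI : ∀ (v : V) (P : G.Walk v v → Prop), Finite {w : G.Walk v v // w.length = i ∧ P w} :=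
    fun v P => finite_and (fun w => w.length = i) P
  rw [cycleFreeWalkCount, cwwcCount, nat_card_sigma', nat_card_sigma', nat_card_sigma',
    nat_card_sigma', ← Finset.sum_add_distrib, ← Finset.sum_add_distrib]
  refine Finset.sum_congr rfl fun v _ => ?_
  have := nat_card_split3 (fun w : G.Walk v v => w.length = i) cycleFree Walk.IsCycle
    (fun w hw => IsCycle.not_cycleFree hw)
  rw [this]
  rfl

open Matrix in
lemma trace_eq_closed_walks (i : ℕ) :
    ((G.adjMatrix ℝ) ^ i).trace
      = (Nat.card (Σ v : V, {w : G.Walk v v // w.length = i}) : ℝ) := by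
  rw [nat_card_sigma']
  push_cast
  rw [Matrix.trace]
  refine Finset.sum_congr rfl fun v _ => ?_
  rw [Matrix.diag_apply, SimpleGraph.adjMatrix_pow_apply_eq_card_walk,
    Nat.card_eq_fintype_card]
  norm_cast

end Counting

/-- For a `(d_v, d_c)`-regular bipartite graph, the number of `i`-cycles equals
`(Σ_j λ_j^i − Ω_i − Ψ_i)/(2i)`. -/
theorem stmt7 {V : Type*} [Fintype V] [DecidableEq V] (G : SimpleGraph V)
    [DecidableRel G.Adj] (U : Set V) [DecidablePred (· ∈ U)] (dv dc : ℕ)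
    (hbip : ∀ a b : V, G.Adj a b → (a ∈ U ↔ b ∉ U))
    (hdv : ∀ v ∈ U, G.degree v = dv) (hdc : ∀ v : V, v ∉ U → G.degree v = dc)
    (i : ℕ) (hA : (G.adjMatrix ℝ).IsHermitian) :
    (cycleCount G i : ℝ) =
      (∑ j : V, hA.eigenvalues j ^ i
        - (cycleFreeWalkCount G i : ℝ) - (cwwcCount G i : ℝ)) / (2 * i) := by
  classical
  have key : ∑ j : V, hA.eigenvalues j ^ i
      = (cycleFreeWalkCount G i : ℝ) + (cwwcCount G i : ℝ) + 2 * i * (cycleCount G i : ℝ) := by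
    rw [sum_pow_eigenvalues _ hA i, trace_eq_closed_walks G i, walk_partition G i,
      cycle_walk_count G i]
    push_cast
    ring
  rcases eq_or_ne i 0 with rfl | hi
  · have h0 : cycleCount G 0 = 0 := by
      have : IsEmpty {s : Set (Sym2 V) //
          ∃ (u : V) (c : G.Walk u u), c.IsCycle ∧ c.length = 0 ∧ {e | e ∈ c.edges} = s} := by
        constructor
        rintro ⟨s, u, c, hc, hl, -⟩
        have := hc.three_le_length
        omega
      rw [cycleCount, Nat.card_of_isEmpty]
    rw [h0, key, h0]
    push_cast
    ring
  · have h2i : (2 * i : ℝ) ≠ 0 := by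
      simp [hi]
    rw [key]
    field_simp
    ring
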